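/- Let γ > 0, C ≥ 0, r₀ > 0, q > 1, and μ > 0 with μ ≠ q − 1. Suppose r: [0,∞) → (0,∞) satisfies r'(t) = −(γ + C e^{−μγ t}) r(t)^q + γ r(t), r(0) = r₀. Then r(t) → 1 as t → ∞. -/

import Mathlib

open Set Real Filter

theorem stmt18 (γ C r₀ q μ : ℝ) (hγ : 0 < γ) (hC : 0 ≤ C) (hr₀ : 0 < r₀)
    (hq : 1 < q) (hμ : 0 < μ) (hμq : μ ≠ q - 1)
    (r : ℝ → ℝ)
    (hpos : ∀ t : ℝ, 0 ≤ t → 0 < r t)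
    (hr0 : r 0 = r₀)
    (hderiv : ∀ t : ℝ, 0 ≤ t →
      HasDerivAt r (-(γ + C * Real.exp (-μ * γ * t)) * r t ^ q + γ * r t) t) :
    Tendsto r atTop (nhds 1) := by
  have hne : (1 : ℝ) - q ≠ 0 := by linarith
  set k := (q - 1) * γ with hk_def
  have hk : 0 < k := mul_pos (by linarith) hγ
  have hden : k - μ * γ ≠ 0 := by
    have h : k - μ * γ = (q - 1 - μ) * γ := by rw [hk_def]; ring
    rw [h]
    exact mul_ne_zero (fun h' => hμq (by linarith)) hγ.ne'
  set B := (q - 1) * C / (k - μ * γ) with hB_def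
  have hBeq : B * (k - μ * γ) = (q - 1) * C := div_mul_cancel₀ _ hden
  clear_value B
  clear_value k
  set w : ℝ → ℝ := fun t =>
    ((r t) ^ (1 - q) - (1 + B * Real.exp (-(μ * γ * t)))) * Real.exp (k * t) with hw_def
  have hw : ∀ t : ℝ, 0 ≤ t → HasDerivAt w 0 t := by
    intro t ht
    have hrt := hpos t ht
    have hu : HasDerivAt (fun s => (r s) ^ (1 - q))
        ((-(γ + C * Real.exp (-μ * γ * t)) * r t ^ q + γ * r t) * (1 - q) * r t ^ (1 - q - 1)) t :=
      (hderiv t ht).rpow_const (Or.inl hrt.ne')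
    have hp : HasDerivAt (fun s : ℝ => (1 : ℝ) + B * Real.exp (-(μ * γ * s)))
        (B * (Real.exp (-(μ * γ * t)) * -(μ * γ))) t := by
      simpa using ((((hasDerivAt_id t).const_mul (μ * γ)).neg.exp.const_mul B).const_add 1)
    have hE : HasDerivAt (fun s : ℝ => Real.exp (k * s)) (Real.exp (k * t) * k) t := by
      simpa using ((hasDerivAt_id t).const_mul k).exp
    have hmain := (hu.sub hp).mul hE
    have h1 : r t ^ q * r t ^ (1 - q - 1) = 1 := by
      rw [← Real.rpow_add hrt]; norm_num
    have h2 : r t * r t ^ (1 - q - 1) = r t ^ (1 - q) := by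
      nth_rewrite 1 [← Real.rpow_one (r t)]
      rw [← Real.rpow_add hrt, show (1 : ℝ) + (1 - q - 1) = 1 - q by ring]
    have hkey : ((-(γ + C * Real.exp (-μ * γ * t)) * r t ^ q + γ * r t) * (1 - q) *
          r t ^ (1 - q - 1) - B * (Real.exp (-(μ * γ * t)) * -(μ * γ))) * Real.exp (k * t) +
        ((r t) ^ (1 - q) - (1 + B * Real.exp (-(μ * γ * t)))) * (Real.exp (k * t) * k) = 0 := by
      have hee : Real.exp (-μ * γ * t) = Real.exp (-(μ * γ * t)) := by ring_nf
      rw [hee]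
      linear_combination
        (Real.exp (k * t) * (1 - q) * (-(γ + C * Real.exp (-(μ * γ * t))))) * h1 +
        (Real.exp (k * t) * (1 - q) * γ) * h2 +
        (Real.exp (k * t) * (r t ^ (1 - q) - 1)) * hk_def -
        (Real.exp (k * t) * Real.exp (-(μ * γ * t))) * hBeq
    simp only [Pi.sub_apply] at hmain
    rw [hkey] at hmain
    exact hmain
  have hconst : ∀ t : ℝ, 0 ≤ t → w t = w 0 := by
    intro t ht
    have := constant_of_has_deriv_right_zero (f := w) (a := 0) (b := t)
      (fun x hx => ((hw x hx.1).continuousAt).continuousWithinAt)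
      (fun x hx => (hw x hx.1).hasDerivWithinAt)
    exact this t (right_mem_Icc.2 ht)
  have hformula : ∀ t : ℝ, 0 ≤ t → r t ^ (1 - q) =
      1 + B * Real.exp (-(μ * γ * t)) + (r₀ ^ (1 - q) - 1 - B) * Real.exp (-(k * t)) := by
    intro t ht
    have h := hconst t ht
    simp only [hw_def, mul_zero, neg_zero, Real.exp_zero, mul_one, hr0] at h
    have hEE : Real.exp (-(k * t)) * Real.exp (k * t) = 1 := by
      rw [← Real.exp_add]; simp
    linear_combination Real.exp (-(k * t)) * h -
      (r t ^ (1 - q) - 1 - B * Real.exp (-(μ * γ * t))) * hEE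
  have hg : Tendsto (fun t => 1 + B * Real.exp (-(μ * γ * t)) +
      (r₀ ^ (1 - q) - 1 - B) * Real.exp (-(k * t))) atTop (nhds 1) := by
    have hmono : ∀ c : ℝ, 0 < c → Tendsto (fun t : ℝ => Real.exp (-(c * t))) atTop (nhds 0) := by
      intro c hc
      apply Real.tendsto_exp_atBot.comp
      exact tendsto_neg_atTop_atBot.comp (tendsto_id.const_mul_atTop hc)
    have h1 := hmono (μ * γ) (mul_pos hμ hγ)
    have h2 := hmono k hk
    have hall : Tendsto (fun t => (1 : ℝ) + B * Real.exp (-(μ * γ * t)) +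
        (r₀ ^ (1 - q) - 1 - B) * Real.exp (-(k * t))) atTop
        (nhds (1 + B * 0 + (r₀ ^ (1 - q) - 1 - B) * 0)) :=
      (tendsto_const_nhds.add (h1.const_mul B)).add (h2.const_mul _)
    simpa using hall
  have hlim := hg.rpow_const (p := (1 - q)⁻¹) (Or.inl one_ne_zero)
  rw [Real.one_rpow] at hlim
  refine Tendsto.congr' ?_ hlim
  filter_upwards [eventually_ge_atTop (0 : ℝ)] with t ht
  rw [← hformula t ht, ← Real.rpow_mul (hpos t ht).le, mul_inv_cancel₀ hne, Real.rpow_one]
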